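/- arXiv:1506.06538 — 2 statements merged into one kernel-verified Lean document; each statement's English description precedes it below -/
import Mathlib

section
/- For the sequence a with a_0 = 0, a_1 = 1, a_n = min{k < n : k + a_k ≥ n} (n ≥ 2): for every i ≥ 2, a_{i + a_{i-1}} = i. -/
/-- The sequence defined by `a 0 = 0`, `a 1 = 1`, and for `n ≥ 2`,
`a n = min { k < n : m * k + a k ≥ n }` (for `m = 1` this is the sequence `a` of the paper). -/
noncomputable def jseq (m : ℕ) (n : ℕ) : ℕ :=
  Nat.strongRecOn n (fun n ih =>
    if n = 0 then 0
    else if n = 1 then 1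
    else sInf {k : ℕ | ∃ h : k < n, n ≤ m * k + ih k h})

lemma jseq_eq (m n : ℕ) : jseq m n =
    if n = 0 then 0 else if n = 1 then 1
    else sInf {k : ℕ | ∃ _ : k < n, n ≤ m * k + jseq m k} := by
  rw [jseq, Nat.strongRecOn_eq]
  rfl

lemma jseq_one : jseq 1 1 = 1 := by rw [jseq_eq]; simp

lemma jseq_pos : ∀ n, 1 ≤ n → 1 ≤ jseq 1 n := by
  intro n
  induction n using Nat.strong_induction_on with
  | _ n ih =>
    intro hn
    rcases eq_or_lt_of_le hn with h1 | h2
    · rw [← h1, jseq_one]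
    · have hn2 : 2 ≤ n := h2
      rw [jseq_eq]
      rw [if_neg (by omega), if_neg (by omega)]
      set S := {k : ℕ | ∃ _ : k < n, n ≤ 1 * k + jseq 1 k} with hS
      have hne : S.Nonempty := by
        refine ⟨n - 1, by omega, ?_⟩
        have : 1 ≤ jseq 1 (n-1) := ih (n-1) (by omega) (by omega)
        omega
      have hmem := Nat.sInf_mem hne
      obtain ⟨hlt, hle⟩ := hmem
      by_contra h
      have h0 : sInf S = 0 := by omega
      rw [h0] at hle
      have : jseq 1 0 = 0 := by rw [jseq_eq]; simp
      omega

lemma jseq_spec (n : ℕ) (hn : 2 ≤ n) :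
    jseq 1 n < n ∧ n ≤ jseq 1 n + jseq 1 (jseq 1 n) ∧
    ∀ k, k < n → n ≤ k + jseq 1 k → jseq 1 n ≤ k := by
  have e : jseq 1 n = sInf {k : ℕ | ∃ _ : k < n, n ≤ 1 * k + jseq 1 k} := by
    rw [jseq_eq, if_neg (by omega), if_neg (by omega)]
  have hne : {k : ℕ | ∃ _ : k < n, n ≤ 1 * k + jseq 1 k}.Nonempty := by
    refine ⟨n - 1, by omega, ?_⟩
    have : 1 ≤ jseq 1 (n-1) := jseq_pos (n-1) (by omega)
    omega
  have hmem := Nat.sInf_mem hne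
  rw [← e] at hmem
  obtain ⟨hlt, hle⟩ := hmem
  refine ⟨hlt, by omega, fun k hk hk2 => ?_⟩
  rw [e]
  exact Nat.sInf_le ⟨hk, by omega⟩

lemma jseq_mono : Monotone (jseq 1) := by
  have step : ∀ n, jseq 1 n ≤ jseq 1 (n + 1) := by
    intro n
    match n with
    | 0 => rw [jseq_eq 1 0]; simp
    | 1 =>
      have h2 := jseq_spec 2 le_rfl
      have := jseq_pos 2 (by omega)
      show jseq 1 1 ≤ jseq 1 2
      rw [jseq_one]; omega
    | (k + 2) =>
      set n := k + 2
      obtain ⟨hlt, hle, hmin⟩ := jseq_spec (n+1) (by omega)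
      obtain ⟨hlt', hle', hmin'⟩ := jseq_spec n (by omega)
      rcases lt_or_eq_of_le (Nat.lt_succ_iff.mp hlt) with h | h
      · exact hmin' _ h (by omega)
      · omega
  exact monotone_nat_of_le_succ step

/-- For every `i ≥ 2`, `a (i + a (i-1)) = i`. -/
theorem jseq_add_pred (i : ℕ) (hi : 2 ≤ i) : jseq 1 (i + jseq 1 (i - 1)) = i := by
  have hpos : 1 ≤ jseq 1 (i - 1) := jseq_pos _ (by omega)
  set N := i + jseq 1 (i - 1) with hN
  obtain ⟨hlt, hle, hmin⟩ := jseq_spec N (by omega)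
  have hmono : jseq 1 (i - 1) ≤ jseq 1 i := jseq_mono (by omega)
  have hiS : jseq 1 N ≤ i := hmin i (by omega) (by omega)
  by_contra h
  have hk : jseq 1 N < i := by omega
  have h1 : jseq 1 (jseq 1 N) ≤ jseq 1 (i - 1) := jseq_mono (by omega)
  omega
end

section
/- In any finite linear Jaco graph J_n(f) with f(x) = mx + c (m ≥ 1, c ≥ 0) and n ≥ 2, consecutive vertices have total degrees (in the underlying undirected graph) differing by at most m: |d(v_i) − d(v_{i−1})| ≤ m for all 2 ≤ i ≤ n. -/
/-- In-degree of vertex `j` in the infinite linear Jaco graph for `f x = m * x + c`: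
`d⁻(v_j)` is the number of tails `1 ≤ i < j` with `f i + i - d⁻(v_i) ≥ j`
(stated subtraction-free as `j + d⁻(v_i) ≤ m * i + c + i`). -/
noncomputable def jacoIndeg (m c : ℕ) (j : ℕ) : ℕ :=
  Nat.strongRecOn j (fun j ih =>
    ((Finset.Ico 1 j).attach.filter (fun i =>
      j + ih i.1 (Finset.mem_Ico.mp i.2).2 ≤ m * i.1 + c + i.1)).card)

/-- `(v_i, v_j)` is an arc of the infinite Jaco graph `J_∞(mx + c)` iff `1 ≤ i < j` and
`f(i) + i - d⁻(v_i) ≥ j`. -/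
def JacoArc (m c i j : ℕ) : Prop :=
  1 ≤ i ∧ i < j ∧ j + jacoIndeg m c i ≤ m * i + c + i

noncomputable instance (m c i j : ℕ) : Decidable (JacoArc m c i j) := by
  unfold JacoArc; infer_instance

/-- Out-degree of `v_i` in the infinite Jaco graph `J_∞(mx + c)`. -/
noncomputable def jacoOutdegInf (m c i : ℕ) : ℕ := {j | JacoArc m c i j}.ncard

/-- Out-degree of `v_i` in the finite Jaco graph `J_n(mx + c)`. -/
noncomputable def jacoOutdeg (m c n i : ℕ) : ℕ :=
  ((Finset.Icc 1 n).filter (fun j => JacoArc m c i j)).card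

/-- Total degree of `v_i` in the underlying graph of `J_n(mx + c)`
(for `i ≤ n` the in-degree in `J_n` agrees with that in `J_∞`). -/
noncomputable def jacoDeg (m c n i : ℕ) : ℕ := jacoIndeg m c i + jacoOutdeg m c n i

/-- Number of arcs of the finite Jaco graph `J_n(mx + c)`. -/
noncomputable def jacoArcs (m c n : ℕ) : ℕ :=
  (((Finset.Icc 1 n) ×ˢ (Finset.Icc 1 n)).filter (fun p => JacoArc m c p.1 p.2)).card

lemma indeg_eq (m c j : ℕ) : jacoIndeg m c j
    = ((Finset.Ico 1 j).filter (fun i => j + jacoIndeg m c i ≤ m * i + c + i)).card := by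
  rw [jacoIndeg, Nat.strongRecOn.eq_1, WellFounded.fix_eq]
  apply Finset.card_bij (fun a _ => a.1)
  · intro a ha
    rw [Finset.mem_filter] at ha ⊢
    exact ⟨a.2, ha.2⟩
  · intro a _ b _ h
    exact Subtype.ext h
  · intro b hb
    rw [Finset.mem_filter] at hb
    exact ⟨⟨b, hb.1⟩, by rw [Finset.mem_filter]; exact ⟨Finset.mem_attach _ _, hb.2⟩, rfl⟩

noncomputable def jacoT (m c i : ℕ) : ℤ := (m + 1 : ℤ) * i + c - jacoIndeg m c i

lemma arc_iff (m c i j : ℕ) :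
    (j + jacoIndeg m c i ≤ m * i + c + i) ↔ (j : ℤ) ≤ jacoT m c i := by
  unfold jacoT
  constructor
  · intro h
    have : (j : ℤ) + jacoIndeg m c i ≤ m * i + c + i := by exact_mod_cast h
    linarith
  · intro h
    have : (j : ℤ) + jacoIndeg m c i ≤ m * i + c + i := by linarith
    exact_mod_cast this

lemma indeg_eqT (m c j : ℕ) : jacoIndeg m c j
    = ((Finset.Ico 1 j).filter (fun i => (j : ℤ) ≤ jacoT m c i)).card := by
  rw [indeg_eq]
  congr 1
  apply Finset.filter_congr
  intro i _
  simp [arc_iff]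

lemma indeg_le (m c j : ℕ) : jacoIndeg m c j ≤ j - 1 := by
  rw [indeg_eq]
  calc _ ≤ (Finset.Ico 1 j).card := Finset.card_filter_le _ _
  _ = j - 1 := by rw [Nat.card_Ico]

lemma T_ge (m c j : ℕ) (hj : 1 ≤ j) : (m : ℤ) * j + c + 1 ≤ jacoT m c j := by
  have h : jacoIndeg m c j + 1 ≤ j := by have := indeg_le m c j; omega
  have h' : (jacoIndeg m c j : ℤ) + 1 ≤ j := by exact_mod_cast h
  unfold jacoT; linarith

lemma indeg_succ_le (m c j : ℕ) : jacoIndeg m c (j + 1) ≤ jacoIndeg m c j + 1 := by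
  rcases Nat.eq_zero_or_pos j with rfl | hj
  · rw [indeg_eq]; simp
  rw [indeg_eq m c (j+1), indeg_eq m c j]
  have hins : Finset.Ico 1 (j+1) = insert j (Finset.Ico 1 j) := by
    ext x; simp only [Finset.mem_Ico, Finset.mem_insert]; omega
  rw [hins, Finset.filter_insert]
  have hsub : (Finset.Ico 1 j).filter (fun i => j + 1 + jacoIndeg m c i ≤ m * i + c + i)
      ⊆ (Finset.Ico 1 j).filter (fun i => j + jacoIndeg m c i ≤ m * i + c + i) := by
    intro x hx
    rw [Finset.mem_filter] at hx ⊢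
    exact ⟨hx.1, by omega⟩
  have hc := Finset.card_le_card hsub
  split
  · calc _ ≤ _ + 1 := Finset.card_insert_le _ _
      _ ≤ _ + 1 := by omega
  · omega

lemma T_succ_ge (m c j : ℕ) : jacoT m c j + m ≤ jacoT m c (j + 1) := by
  have h := indeg_succ_le m c j
  have h' : (jacoIndeg m c (j+1) : ℤ) ≤ jacoIndeg m c j + 1 := by exact_mod_cast h
  unfold jacoT; push_cast; linarith

lemma indeg_le_succ (m c j : ℕ) (hm : 1 ≤ m) : jacoIndeg m c j ≤ jacoIndeg m c (j + 1) := by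
  rw [indeg_eqT m c j, indeg_eqT m c (j+1)]
  apply Finset.card_le_card_of_injOn (fun i => i + 1)
  · intro i hi
    simp only [Finset.mem_coe] at hi ⊢
    rw [Finset.mem_filter, Finset.mem_Ico] at hi ⊢
    refine ⟨⟨by omega, by omega⟩, ?_⟩
    have h1 := T_succ_ge m c i
    have hm' : (1 : ℤ) ≤ m := by exact_mod_cast hm
    have := hi.2
    push_cast
    linarith
  · intro a _ b _ h
    simpa using h

lemma outdeg_eq (m c n i : ℕ) (hi : 1 ≤ i) :
    jacoOutdeg m c n i = min n (jacoT m c i).toNat - i := by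
  have hT0 : 0 ≤ jacoT m c i := by
    have := T_ge m c i hi
    have : (0:ℤ) ≤ (m:ℤ) * i + c + 1 := by positivity
    linarith [T_ge m c i hi]
  unfold jacoOutdeg
  have hset : (Finset.Icc 1 n).filter (fun j => JacoArc m c i j)
      = Finset.Ioc i (min n (jacoT m c i).toNat) := by
    ext j
    rw [Finset.mem_filter, Finset.mem_Icc, Finset.mem_Ioc]
    unfold JacoArc
    rw [arc_iff]
    rw [← Int.le_toNat hT0]
    constructor
    · rintro ⟨⟨_, h2⟩, _, h4, h5⟩
      exact ⟨h4, le_min h2 h5⟩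
    · rintro ⟨h1, h2⟩
      have := min_le_left n (jacoT m c i).toNat
      have := min_le_right n (jacoT m c i).toNat
      exact ⟨⟨by omega, by omega⟩, hi, h1, by omega⟩
  rw [hset, Nat.card_Ioc]


/-- In `J_n(mx + c)` with `n ≥ 2`, consecutive vertices have total degrees differing
by at most `m`. -/
theorem jaco_deg_consecutive (m c n i : ℕ) (hm : 1 ≤ m) (hn : 2 ≤ n)
    (hi : 2 ≤ i) (hin : i ≤ n) :
    |(jacoDeg m c n i : ℤ) - (jacoDeg m c n (i - 1) : ℤ)| ≤ (m : ℤ) := by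
  obtain ⟨k, rfl⟩ : ∃ k, i = k + 1 := ⟨i - 1, by omega⟩
  have hk : 1 ≤ k := by omega
  have hi1 : (k + 1) - 1 = k := by omega
  rw [hi1]
  set b1 := (jacoT m c k).toNat with hb1def
  set b2 := (jacoT m c (k+1)).toNat with hb2def
  have hT0 : 0 ≤ jacoT m c k := by
    have h := T_ge m c k hk
    have : (0:ℤ) ≤ (m:ℤ) * k + c + 1 := by positivity
    linarith
  have hT0' : 0 ≤ jacoT m c (k+1) := by
    have h := T_ge m c (k+1) (by omega)
    push_cast at h
    have : (0:ℤ) ≤ (m:ℤ) * ((k:ℤ)+1) + c + 1 := by positivity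
    linarith
  have hb1 : (b1 : ℤ) = jacoT m c k := Int.toNat_of_nonneg hT0
  have hb2 : (b2 : ℤ) = jacoT m c (k+1) := Int.toNat_of_nonneg hT0'
  have hTrel : jacoT m c (k+1) = jacoT m c k + (m + 1)
      - ((jacoIndeg m c (k+1) : ℤ) - (jacoIndeg m c k : ℤ)) := by
    unfold jacoT; push_cast; ring
  have hD1 : jacoIndeg m c k ≤ jacoIndeg m c (k+1) := indeg_le_succ m c k hm
  have hD2 : jacoIndeg m c (k+1) ≤ jacoIndeg m c k + 1 := indeg_succ_le m c k
  -- lower bounds on b1, b2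
  have hge1 : (k : ℤ) + 1 ≤ jacoT m c k := by
    have h := T_ge m c k hk
    have : (k : ℤ) ≤ (m:ℤ) * k := le_mul_of_one_le_left (by positivity) (by exact_mod_cast hm)
    linarith
  have hge2 : (k : ℤ) + 2 ≤ jacoT m c (k+1) := by
    have h := T_ge m c (k+1) (by omega)
    push_cast at h
    have : (k : ℤ) + 1 ≤ (m:ℤ) * ((k:ℤ)+1) := le_mul_of_one_le_left (by positivity) (by exact_mod_cast hm)
    linarith
  have hb1k : k + 1 ≤ b1 := by omega
  have hb2k : k + 2 ≤ b2 := by omega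
  have ho1 : jacoOutdeg m c n (k+1) = min n b2 - (k+1) := outdeg_eq m c n (k+1) (by omega)
  have ho2 : jacoOutdeg m c n k = min n b1 - k := outdeg_eq m c n k hk
  unfold jacoDeg
  rw [ho1, ho2]
  rw [abs_le]
  constructor <;> omega
end
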